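/- Let φ₁, φ₂ : ℤ × ℤ → ℂ each satisfy (E1) and (E2), and let S = ℤ →₀ ℂ with standard basis {W_m | m ∈ ℤ}. Let ∘ and • be the ℂ-bilinear operations on S determined by W_n ∘ W_m = φ₁(n,m)·W_{m+n} and W_n • W_m = φ₂(n,m)·W_{m+n}. Then there exists a ℂ-linear bijection T : S → S with T(x ∘ y) = T(x) • T(y) for all x,y ∈ S if and only if either φ₁(n,m) = φ₂(n,m) for all m,n ∈ ℤ, or φ₁(n,m) = −φ₂(−n,−m) for all m,n ∈ ℤ. -/

import Mathlib

/-- The standard basis vector at `m` in `ℤ →₀ ℂ`. -/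
noncomputable def W (m : ℤ) : ℤ →₀ ℂ := Finsupp.single m 1


section
variable (φ : ℤ × ℤ → ℂ)

-- step 1-7: any bad s forces φ(0,0) = -s
lemma bad_forces (hE1 : ∀ m n : ℤ, φ (m, n) - φ (n, m) = (n : ℂ) - m)
    (hE2 : ∀ m n l : ℤ, ((n : ℂ) - m) * φ (m + n, l)
        = φ (m, l) * φ (n, m + l) - φ (n, l) * φ (m, n + l))
    (s : ℤ) (hs : φ (0, s) ≠ φ (0,0) - s) : φ (0,0) = -(s:ℂ) := by
  set c := φ (0,0) with hc
  -- L1 : ∀ n l, φ (n,l) * ((n:ℂ) + φ (0, n+l) - φ (0,l)) = 0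
  have L1 : ∀ n l : ℤ, φ (n, l) * ((n:ℂ) + φ (0, n + l) - φ (0, l)) = 0 := by
    intro n l
    have h := hE2 0 n l
    simp only [Int.cast_zero, zero_add] at h
    ring_nf
    ring_nf at h
    linear_combination h
  have hs0 : s ≠ 0 := by rintro rfl; exact hs (by ring)
  have hsC : (s:ℂ) ≠ 0 := Int.cast_ne_zero.mpr hs0
  have h1 : φ (s, 0) = 0 := by
    have := L1 s 0
    simp only [add_zero] at this
    rcases mul_eq_zero.mp this with h | h
    · exact h
    · exfalso; apply hs; linear_combination h
  have h2 : φ (0, s) = s := by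
    have := hE1 s 0
    push_cast at this
    linear_combination -this + h1
  have hc2s : c - 2*s ≠ 0 := by
    intro h; apply hs; rw [h2]; linear_combination -h
  have h3 : φ (-s, s) = 0 := by
    have := L1 (-s) s
    simp only [neg_add_cancel] at this
    rcases mul_eq_zero.mp this with h | h
    · exact h
    · exfalso; apply hc2s; push_cast at h; linear_combination h + h2
  have h4 : φ (s, -s) = -2*(s:ℂ) := by
    have := hE1 (-s) s
    push_cast at this
    linear_combination -this + h3
  have h5 : φ (0, -s) = c + s := by
    have := L1 s (-s)
    simp only [add_neg_cancel] at this
    rw [h4] at this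
    rcases mul_eq_zero.mp this with h | h
    · exfalso; apply hsC; linear_combination -h/2
    · push_cast at h; linear_combination -h
  have h6 : φ (-s, 0) = c + 2*s := by
    have := hE1 0 (-s)
    push_cast at this
    linear_combination -this + h5
  -- E2 (s, -s, 0)
  have h7 := hE2 s (-s) 0
  simp only [add_neg_cancel, add_zero, neg_add_cancel] at h7
  rw [h1, h3, h4, h6] at h7
  push_cast at h7
  have : (4:ℂ) * s * (c + s) = 0 := by linear_combination -h7
  rcases mul_eq_zero.mp this with h | h
  · exfalso
    rcases mul_eq_zero.mp h with h | h
    · norm_num at h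
    · exact hsC h
  · linear_combination h

end

section
variable (φ : ℤ × ℤ → ℂ)
  (hE1 : ∀ m n : ℤ, φ (m, n) - φ (n, m) = (n : ℂ) - m)
  (hE2 : ∀ m n l : ℤ, ((n : ℂ) - m) * φ (m + n, l)
        = φ (m, l) * φ (n, m + l) - φ (n, l) * φ (m, n + l))

include hE1 hE2

lemma zero_row : ∀ l : ℤ, φ (0, l) = φ (0,0) - l := by
  by_contra h
  push_neg at h
  obtain ⟨s, hs⟩ := h
  have hcs := bad_forces φ hE1 hE2 s hs
  set c := φ (0,0) with hc
  have hs0 : s ≠ 0 := by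
    rintro rfl; apply hs; rw [Int.cast_zero, sub_zero]
  have hsC : (s:ℂ) ≠ 0 := Int.cast_ne_zero.mpr hs0
  -- all other rows of φ(0,·) are good
  have good : ∀ l : ℤ, l ≠ s → φ (0, l) = c - l := by
    intro l hl
    by_contra hbad
    have h9 := bad_forces φ hE1 hE2 l hbad
    have h10 : (-(s:ℂ)) = -(l:ℂ) := hcs.symm.trans (hc.trans h9)
    exact hl (by exact_mod_cast neg_injective h10.symm)
  -- φ (n, s - n) = 0 for n ≠ 0
  have van : ∀ n : ℤ, n ≠ 0 → φ (n, s - n) = 0 := by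
    intro n hn
    have L1 : φ (n, s - n) * ((n:ℂ) + φ (0, n + (s - n)) - φ (0, s - n)) = 0 := by
      have h := hE2 0 n (s - n)
      simp only [Int.cast_zero, zero_add] at h
      linear_combination h
    rcases mul_eq_zero.mp L1 with h | h
    · exact h
    · exfalso
      have e1 : n + (s - n) = s := by ring
      rw [e1] at h
      have h2 : φ (0, s) = s := by
        -- from bad_forces steps: φ(s,0) = 0 and E1; rederive quickly
        have L1' : φ (s, 0) * ((s:ℂ) + φ (0, s + 0) - φ (0, 0)) = 0 := by
          have h' := hE2 0 s 0
          simp only [Int.cast_zero, zero_add] at h'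
          linear_combination h'
        simp only [add_zero] at L1'
        rcases mul_eq_zero.mp L1' with h' | h'
        · have := hE1 s 0
          push_cast at this
          linear_combination -this + h'
        · exfalso; apply hs; linear_combination h'
      have h3 := good (s - n) (by omega)
      push_cast at h3
      rw [h2, h3] at h
      push_cast at h
      -- h : n + s - (c - (s - n)) = 0, with c = -s gives 3s = 0
      apply hsC
      have : (3:ℂ) * s = 0 := by linear_combination h + hcs
      have h9 : (s:ℂ) = 0 := by linear_combination this / 3
      exact h9
  -- contradiction: for n ∉ {0, s}: E1 gives s - 2n = 0
  have contra : ∀ n : ℤ, n ≠ 0 → n ≠ s → (s:ℂ) - 2*n = 0 := by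
    intro n h0 hns
    have v1 := van n h0
    have v2 := van (s - n) (by omega)
    have e : s - (s - n) = n := by ring
    rw [e] at v2
    have := hE1 n (s - n)
    push_cast at this
    linear_combination -this + v1 - v2
  -- pick n = s+1 or n = s+3
  by_cases h1 : s + 1 ≠ 0 ∧ s + 1 ≠ s ∧ s ≠ 2*(s+1)
  · obtain ⟨a1, a2, a3⟩ := h1
    have := contra (s+1) a1 a2
    push_cast at this
    apply a3
    have : (s:ℂ) = 2*(s+1) := by linear_combination this
    exact_mod_cast this
  · push_neg at h1
    have hs13 : s = -1 ∨ s = -2 := by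
      by_cases e1 : s + 1 = 0
      · left; omega
      · right
        have := h1 e1
        by_cases e2 : s + 1 = s
        · omega
        · have := this e2; omega
    have a1 : s + 3 ≠ 0 := by omega
    have a2 : s + 3 ≠ s := by omega
    have := contra (s+3) a1 a2
    push_cast at this
    have h9 : (s:ℤ) = -6 := by
      have : (s:ℂ) = -6 := by linear_combination -this
      exact_mod_cast this
    omega

end

section
variable (φ : ℤ × ℤ → ℂ)
  (hE1 : ∀ m n : ℤ, φ (m, n) - φ (n, m) = (n : ℂ) - m)
  (hE2 : ∀ m n l : ℤ, ((n : ℂ) - m) * φ (m + n, l)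
        = φ (m, l) * φ (n, m + l) - φ (n, l) * φ (m, n + l))

include hE1 hE2

lemma classify : ∀ n m : ℤ, φ (n, m) = φ (0,0) - m - 2*n := by
  have zr := zero_row φ hE1 hE2
  set c := φ (0,0) with hc
  have col : ∀ l : ℤ, φ (l, 0) = c - 2*l := by
    intro l
    have h := hE1 l 0
    have h2 := zr l
    push_cast at h ⊢
    linear_combination h + h2
  have offd : ∀ n m : ℤ, n ≠ m → φ (n, m) = c - m - 2*n := by
    intro n m hnm
    have h := hE2 m n 0
    simp only [add_zero] at h
    rw [col m, col n, col (m+n)] at h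
    have e1 := hE1 m n
    have hne : (n:ℂ) - m ≠ 0 := by
      rw [sub_ne_zero]; exact_mod_cast hnm
    -- h : (n-m)(c-2(m+n)) = (c-2m)*φ(n,m) - (c-2n)*φ(m,n)
    -- e1 : φ(m,n) - φ(n,m) = n - m
    -- goal: φ(n,m) = c - m - 2n
    have key : ((n:ℂ) - m) * (φ (n, m) - (c - m - 2*n)) = 0 := by
      push_cast at h ⊢
      linear_combination -h/2 + ((c - 2*(n:ℂ))/2) * e1
    rcases mul_eq_zero.mp key with h' | h'
    · exact absurd h' hne
    · linear_combination h'
  intro n m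
  by_cases hnm : n ≠ m
  · exact offd n m hnm
  push_neg at hnm
  subst hnm
  by_cases ht : n = 0
  · subst ht; push_cast; ring
  have htC : (n:ℂ) ≠ 0 := Int.cast_ne_zero.mpr ht
  by_cases hcz : c = 0
  · -- use E2 (n, 3n, n)
    have h := hE2 n (3*n) n
    have e1 : n + 3*n = 4*n := by ring
    have e2 : n + n = 2*n := by ring
    have e3 : 3*n + n = 4*n := by ring
    rw [e1, e2, e3] at h
    rw [offd (4*n) n (by omega), offd (3*n) (2*n) (by omega),
        offd (3*n) n (by omega), offd n (4*n) (by omega), hcz] at h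
    push_cast at h ⊢
    rw [hcz]
    -- h : (3n - n)(0 - n - 2*4n) = φ(n,n)*(0-2n-6n) - (0-n-6n)(0-4n-2n)
    have key : (8:ℂ) * n * (φ (n,n) - (0 - n - 2*n)) = 0 := by
      linear_combination h
    rcases mul_eq_zero.mp key with h' | h'
    · exfalso; rcases mul_eq_zero.mp h' with h'' | h''
      · norm_num at h''
      · exact htC h''
    · linear_combination h'
  · -- use E2 (n, -n, n)
    have h := hE2 n (-n) n
    have e1 : n + -n = 0 := by ring
    have e2 : n + n = 2*n := by ring
    have e3 : -n + n = 0 := by ring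
    rw [e1, e2, e3] at h
    rw [zr n, offd (-n) (2*n) (by omega), offd (-n) n (by omega), col n] at h
    push_cast at h ⊢
    -- h : (-n - n)(c - n) = φ(n,n)*(c - 2n + 2n) - (c - n + 2n)(c - 2n)
    have key : (c:ℂ) * (φ (n,n) - (c - n - 2*n)) = 0 := by
      linear_combination -h
    rcases mul_eq_zero.mp key with h' | h'
    · exact absurd h' hcz
    · linear_combination h'

end


lemma single_eq_smul_W (a : ℤ) (b : ℂ) : Finsupp.single a b = b • W a := by
  rw [W, Finsupp.smul_single]; simp

lemma W_ne_zero (m : ℤ) : W m ≠ 0 := by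
  intro hz
  exact one_ne_zero (Finsupp.single_eq_zero.mp hz)

section coeffs
variable (φ : ℤ × ℤ → ℂ) (mul : (ℤ →₀ ℂ) →ₗ[ℂ] (ℤ →₀ ℂ) →ₗ[ℂ] (ℤ →₀ ℂ))
  (h : ∀ n m : ℤ, mul (W n) (W m) = φ (n, m) • W (m + n))

include h

lemma mul_right_coeff (x : ℤ →₀ ℂ) (k i : ℤ) :
    (mul x (W k)) i = x (i - k) * φ (i - k, k) := by
  induction x using Finsupp.induction_linear with
  | zero => simp
  | add f g hf hg =>
      rw [map_add, LinearMap.add_apply, Finsupp.add_apply, hf, hg, Finsupp.add_apply, add_mul]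
  | single a b =>
      rw [single_eq_smul_W, map_smul, LinearMap.smul_apply, Finsupp.smul_apply, h a k,
        Finsupp.smul_apply]
      simp only [Finsupp.smul_apply, W, Finsupp.single_apply, smul_eq_mul]
      by_cases hik : a = i - k
      · subst hik; simp
      · have h2 : ¬ (k + a = i) := by omega
        simp [h2, hik]

lemma mul_left_coeff (x : ℤ →₀ ℂ) (k i : ℤ) :
    (mul (W k) x) i = φ (k, i - k) * x (i - k) := by
  induction x using Finsupp.induction_linear with
  | zero => simp
  | add f g hf hg =>
      rw [map_add, Finsupp.add_apply, hf, hg, Finsupp.add_apply, mul_add]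
  | single a b =>
      rw [single_eq_smul_W, map_smul, Finsupp.smul_apply, h k a,
        Finsupp.smul_apply]
      simp only [Finsupp.smul_apply, W, Finsupp.single_apply, smul_eq_mul]
      by_cases hik : a = i - k
      · subst hik; simp [mul_comm]
      · have h2 : ¬ (a + k = i) := by omega
        simp [h2, hik]

end coeffs

section forward
variable (φ₁ φ₂ : ℤ × ℤ → ℂ)
    (mul₁ mul₂ : (ℤ →₀ ℂ) →ₗ[ℂ] (ℤ →₀ ℂ) →ₗ[ℂ] (ℤ →₀ ℂ))
    (h₁ : ∀ n m : ℤ, mul₁ (W n) (W m) = φ₁ (n, m) • W (m + n))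
    (h₂ : ∀ n m : ℤ, mul₂ (W n) (W m) = φ₂ (n, m) • W (m + n))
    (cl₁ : ∀ n m : ℤ, φ₁ (n, m) = φ₁ (0,0) - m - 2*n)
    (cl₂ : ∀ n m : ℤ, φ₂ (n, m) = φ₂ (0,0) - m - 2*n)
    (T : (ℤ →₀ ℂ) ≃ₗ[ℂ] (ℤ →₀ ℂ))
    (hT : ∀ x y : ℤ →₀ ℂ, T (mul₁ x y) = mul₂ (T x) (T y))

include h₁ h₂ cl₁ cl₂ hT

lemma forward_key : φ₁ (0,0) = φ₂ (0,0) ∨ φ₁ (0,0) = -φ₂ (0,0) := by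
  set c₁ := φ₁ (0,0) with hc₁
  set c₂ := φ₂ (0,0) with hc₂
  set u := T (W 0) with hu
  -- F1
  have F1 : ∀ y : ℤ →₀ ℂ, (2:ℂ) • mul₁ (W 0) y - mul₁ y (W 0) = c₁ • y := by
    intro y
    ext i
    rw [Finsupp.sub_apply, Finsupp.smul_apply, Finsupp.smul_apply,
      mul_left_coeff φ₁ mul₁ h₁, mul_right_coeff φ₁ mul₁ h₁, cl₁, cl₁]
    push_cast
    simp only [smul_eq_mul]
    ring
  -- F2
  have F2 : ∀ z : ℤ →₀ ℂ, (2:ℂ) • mul₂ u z - mul₂ z u = c₁ • z := by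
    intro z
    have h := congrArg T (F1 (T.symm z))
    rw [map_sub, map_smul, map_smul, hT, hT, T.apply_symm_apply] at h
    exact h
  -- F4
  have F4 : ∀ j : ℤ, u j * (c₂ - 3*(j:ℂ)) = if j = 0 then c₁ else 0 := by
    intro j
    have h := DFunLike.congr_fun (F2 (W 0)) j
    rw [Finsupp.sub_apply, Finsupp.smul_apply, Finsupp.smul_apply,
      mul_left_coeff φ₂ mul₂ h₂, mul_right_coeff φ₂ mul₂ h₂, cl₂, cl₂] at h
    rw [W, Finsupp.single_apply] at h
    simp only [sub_zero, smul_eq_mul] at h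
    by_cases hj : j = 0
    · subst hj
      rw [if_pos rfl]
      push_cast at h ⊢
      simp only [smul_eq_mul, mul_one] at h
      linear_combination h
    · rw [if_neg hj]
      rw [if_neg (by omega : ¬ (0 = j))] at h
      push_cast at h ⊢
      simp only [smul_eq_mul, mul_zero] at h
      linear_combination h
  -- F5
  have F5 : ∀ m : ℤ, mul₂ u (T (W m)) - mul₂ (T (W m)) u = (m:ℂ) • T (W m) := by
    intro m
    have base : mul₁ (W 0) (W m) - mul₁ (W m) (W 0) = (m:ℂ) • W m := by
      rw [h₁, h₁, add_zero, zero_add, ← sub_smul, cl₁, cl₁]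
      congr 1
      push_cast
      ring
    have h := congrArg T base
    rw [map_sub, map_smul, hT, hT] at h
    exact h
  by_cases hcase : ∀ j : ℤ, j ≠ 0 → u j = 0
  · -- Case I : u = a • W 0
    set a := u 0 with ha_def
    have ha : a * c₂ = c₁ := by
      have := F4 0
      rw [if_pos rfl] at this
      push_cast at this
      linear_combination this
    have huW : u = a • W 0 := by
      ext i
      rw [Finsupp.smul_apply, W, Finsupp.single_apply]
      by_cases hi : i = 0
      · subst hi; simp [ha_def]
      · rw [if_neg (by omega : ¬ (0 = i)), hcase i hi, smul_zero]
    have eig : ∀ m i : ℤ, (a * i - m) * (T (W m)) i = 0 := by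
      intro m i
      have h := DFunLike.congr_fun (F5 m) i
      rw [huW] at h
      rw [map_smul, LinearMap.smul_apply, map_smul] at h
      rw [Finsupp.sub_apply, Finsupp.smul_apply, Finsupp.smul_apply, Finsupp.smul_apply,
        mul_left_coeff φ₂ mul₂ h₂, mul_right_coeff φ₂ mul₂ h₂, cl₂, cl₂] at h
      simp only [sub_zero, smul_eq_mul] at h
      push_cast at h
      linear_combination h
    have z1ne : T (W 1) ≠ 0 := by
      intro hz
      exact W_ne_zero 1 (by rwa [LinearEquiv.map_eq_zero_iff] at hz)
    obtain ⟨k₁, hk₁ne⟩ : ∃ i, (T (W 1)) i ≠ 0 := by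
      by_contra hno
      push_neg at hno
      exact z1ne (Finsupp.ext hno)
    have hak₁ : a * (k₁:ℂ) = 1 := by
      have := eig 1 k₁
      rcases mul_eq_zero.mp this with h | h
      · push_cast at h; linear_combination h
      · exact absurd h hk₁ne
    have ha0 : a ≠ 0 := by
      intro h; rw [h, zero_mul] at hak₁; exact one_ne_zero hak₁.symm
    have supp : ∀ m i : ℤ, (T (W m)) i ≠ 0 → i = m * k₁ := by
      intro m i hne
      rcases mul_eq_zero.mp (eig m i) with h | h
      · have : (i:ℂ) = (m:ℂ) * k₁ := by
          have h2 : a * ((i:ℂ) - m * k₁) = 0 := by linear_combination h - (m:ℂ) * hak₁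
          rcases mul_eq_zero.mp h2 with h3 | h3
          · exact absurd h3 ha0
          · linear_combination h3
        exact_mod_cast this
      · exact absurd h hne
    have divl : ∀ (x : ℤ →₀ ℂ) (i : ℤ), ¬ (k₁ ∣ i) → (T x) i = 0 := by
      intro x
      induction x using Finsupp.induction_linear with
      | zero => intro i _; simp
      | add f g hf hg =>
          intro i hi
          rw [map_add, Finsupp.add_apply, hf i hi, hg i hi, add_zero]
      | single a' b =>
          intro i hi
          rw [single_eq_smul_W, map_smul, Finsupp.smul_apply]
          by_cases hz : (T (W a')) i = 0
          · rw [hz, smul_zero]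
          · exfalso
            exact hi ⟨a', by rw [supp a' i hz]; ring⟩
    have hdvd : k₁ ∣ 1 := by
      by_contra hnd
      have := divl (T.symm (W 1)) 1 hnd
      rw [T.apply_symm_apply] at this
      rw [W, Finsupp.single_apply, if_pos rfl] at this
      exact one_ne_zero this
    rcases Int.isUnit_iff.mp (isUnit_of_dvd_one hdvd) with h | h
    · left
      rw [h] at hak₁
      push_cast at hak₁
      rw [mul_one] at hak₁
      rw [← ha, hak₁, one_mul]
    · right
      rw [h] at hak₁
      push_cast at hak₁
      have : a = -1 := by linear_combination -hak₁
      rw [← ha, this]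
      ring
  · -- Case II : impossible
    exfalso
    push_neg at hcase
    obtain ⟨m₀, hm₀ne, hbne⟩ := hcase
    set a := u 0 with ha_def
    set b := u m₀ with hb_def
    have hc2 : c₂ = 3 * (m₀:ℂ) := by
      have h := F4 m₀
      rw [if_neg hm₀ne] at h
      rcases mul_eq_zero.mp h with h' | h'
      · exact absurd h' hbne
      · linear_combination h'
    have huW : u = a • W 0 + b • W m₀ := by
      ext i
      rw [Finsupp.add_apply, Finsupp.smul_apply, Finsupp.smul_apply, W, W,
        Finsupp.single_apply, Finsupp.single_apply]
      by_cases hi0 : i = 0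
      · subst hi0
        rw [if_pos rfl, if_neg (by omega : ¬ (m₀ = 0))]
        simp [ha_def]
      · rw [if_neg (by omega : ¬ (0 = i))]
        by_cases him : i = m₀
        · subst him; rw [if_pos rfl]; simp [hb_def]
        · rw [if_neg (by omega : ¬ (m₀ = i))]
          have h := F4 i
          rw [if_neg hi0] at h
          have hne : c₂ - 3*(i:ℂ) ≠ 0 := by
            rw [hc2]
            intro hz
            have : (m₀:ℂ) = (i:ℂ) := by linear_combination hz/3
            exact him (by exact_mod_cast this.symm)
          rcases mul_eq_zero.mp h with h' | h'
          · rw [h']; simp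
          · exact absurd h' hne
    have star : ∀ m i : ℤ, a * i * (T (W m)) i
        + b * ((i:ℂ) - 2*m₀) * (T (W m)) (i - m₀) = (m:ℂ) * (T (W m)) i := by
      intro m i
      have h := DFunLike.congr_fun (F5 m) i
      rw [huW] at h
      simp only [map_add, map_smul, LinearMap.add_apply, LinearMap.smul_apply,
        Finsupp.sub_apply, Finsupp.add_apply, Finsupp.smul_apply] at h
      rw [mul_left_coeff φ₂ mul₂ h₂, mul_left_coeff φ₂ mul₂ h₂,
        mul_right_coeff φ₂ mul₂ h₂, mul_right_coeff φ₂ mul₂ h₂,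
        cl₂, cl₂, cl₂, cl₂] at h
      simp only [sub_zero, smul_eq_mul] at h
      push_cast at h
      linear_combination h
    have zne : ∀ m : ℤ, T (W m) ≠ 0 := by
      intro m hz
      exact W_ne_zero m (by rwa [LinearEquiv.map_eq_zero_iff] at hz)
    -- key extraction
    have P : ∀ m : ℤ, ∃ k : ℤ, ((0 < m₀ → k ≤ m₀) ∧ (m₀ < 0 → m₀ ≤ k)) ∧ (a:ℂ) * k = m := by
      intro m
      set z := T (W m) with hz_def
      have hsupp : z.support.Nonempty := Finsupp.support_nonempty_iff.mpr (zne m)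
      set kM := z.support.max' hsupp with hkM_def
      set km := z.support.min' hsupp with hkm_def
      have hkMne : z kM ≠ 0 := Finsupp.mem_support_iff.mp (z.support.max'_mem hsupp)
      have hkmne : z km ≠ 0 := Finsupp.mem_support_iff.mp (z.support.min'_mem hsupp)
      have hmM : km ≤ kM := z.support.min'_le kM (z.support.max'_mem hsupp)
      have hout : ∀ i : ℤ, (kM < i ∨ i < km) → z i = 0 := by
        intro i hi
        apply Finsupp.notMem_support_iff.mp
        intro hmem
        have h1 := z.support.le_max' i hmem
        have h2 := z.support.min'_le i hmem
        omega
      rcases lt_trichotomy m₀ 0 with hm₀ | hm₀ | hm₀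
      · -- m₀ < 0 : min support = m₀, use max
        have e1 := star m (km + m₀)
        rw [hout (km + m₀) (by omega), show km + m₀ - m₀ = km from by ring] at e1
        have hb2 : b * ((km:ℂ) + m₀ - 2*m₀) = 0 := by
          rcases mul_eq_zero.mp (by push_cast at e1 ⊢; linear_combination e1 :
            (b * ((km:ℂ) + m₀ - 2*m₀)) * z km = 0) with h | h
          · exact h
          · exact absurd h hkmne
        have hkm_eq : km = m₀ := by
          rcases mul_eq_zero.mp hb2 with h | h
          · exact absurd h hbne
          · have : (km:ℂ) = m₀ := by linear_combination h
            exact_mod_cast this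
        have e2 := star m kM
        rw [hout (kM - m₀) (by omega)] at e2
        refine ⟨kM, ⟨by omega, fun _ => by omega⟩, ?_⟩
        rcases mul_eq_zero.mp (show ((a:ℂ) * kM - m) * z kM = 0 from by
            linear_combination e2) with h | h
        · linear_combination h
        · exact absurd h hkMne
      · omega
      · -- m₀ > 0 : max support = m₀, use min
        have e1 := star m (kM + m₀)
        rw [hout (kM + m₀) (by omega), show kM + m₀ - m₀ = kM from by ring] at e1
        have hb2 : b * ((kM:ℂ) + m₀ - 2*m₀) = 0 := by
          rcases mul_eq_zero.mp (show (b * ((kM:ℂ) + m₀ - 2*m₀)) * z kM = 0 from by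
            push_cast at e1 ⊢; linear_combination e1) with h | h
          · exact h
          · exact absurd h hkMne
        have hkM_eq : kM = m₀ := by
          rcases mul_eq_zero.mp hb2 with h | h
          · exact absurd h hbne
          · have : (kM:ℂ) = m₀ := by linear_combination h
            exact_mod_cast this
        have e2 := star m km
        rw [hout (km - m₀) (by omega)] at e2
        refine ⟨km, ⟨fun _ => by omega, by omega⟩, ?_⟩
        rcases mul_eq_zero.mp (show ((a:ℂ) * km - m) * z km = 0 from by
            linear_combination e2) with h | h
        · linear_combination h
        · exact absurd h hkmne
    -- final contradiction
    obtain ⟨k₁, _, hak₁⟩ := P 1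
    have ha0 : a ≠ 0 := by
      intro h; rw [h, zero_mul] at hak₁; norm_num at hak₁
    have keyk : ∀ m k : ℤ, (a:ℂ) * k = m → k = m * k₁ := by
      intro m k hk
      have h2 : a * ((k:ℂ) - m * k₁) = 0 := by
        push_cast at hk hak₁ ⊢
        linear_combination hk - (m:ℂ) * hak₁
      rcases mul_eq_zero.mp h2 with h3 | h3
      · exact absurd h3 ha0
      · have : (k:ℂ) = (m:ℂ) * k₁ := by linear_combination h3
        exact_mod_cast this
    have hk₁0 : k₁ ≠ 0 := by
      intro h
      rw [h] at hak₁
      push_cast at hak₁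
      norm_num at hak₁
    rcases lt_trichotomy m₀ 0 with hm₀ | hm₀ | hm₀
    · -- need k with m₀ ≤ k = m*k₁ violated : choose m so m*k₁ < m₀
      by_cases hk₁pos : 0 < k₁
      · obtain ⟨k, ⟨_, hge⟩, hak⟩ := P (m₀ - 1)
        have := keyk _ _ hak
        have h9 := hge hm₀
        nlinarith [this, h9, hk₁pos, hm₀]
      · have hk₁neg : k₁ < 0 := by omega
        obtain ⟨k, ⟨_, hge⟩, hak⟩ := P (-(m₀ - 1))
        have := keyk _ _ hak
        have h9 := hge hm₀
        nlinarith [this, h9, hk₁neg, hm₀]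
    · exact hm₀ne hm₀
    · by_cases hk₁pos : 0 < k₁
      · obtain ⟨k, ⟨hle, _⟩, hak⟩ := P (m₀ + 1)
        have := keyk _ _ hak
        have h9 := hle hm₀
        nlinarith [this, h9, hk₁pos, hm₀]
      · have hk₁neg : k₁ < 0 := by omega
        obtain ⟨k, ⟨hle, _⟩, hak⟩ := P (-(m₀ + 1))
        have := keyk _ _ hak
        have h9 := hle hm₀
        nlinarith [this, h9, hk₁neg, hm₀]

end forward


theorem stmt_16 (φ₁ φ₂ : ℤ × ℤ → ℂ)
    (hE1₁ : ∀ m n : ℤ, φ₁ (m, n) - φ₁ (n, m) = (n : ℂ) - m)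
    (hE2₁ : ∀ m n l : ℤ, ((n : ℂ) - m) * φ₁ (m + n, l)
        = φ₁ (m, l) * φ₁ (n, m + l) - φ₁ (n, l) * φ₁ (m, n + l))
    (hE1₂ : ∀ m n : ℤ, φ₂ (m, n) - φ₂ (n, m) = (n : ℂ) - m)
    (hE2₂ : ∀ m n l : ℤ, ((n : ℂ) - m) * φ₂ (m + n, l)
        = φ₂ (m, l) * φ₂ (n, m + l) - φ₂ (n, l) * φ₂ (m, n + l))
    (mul₁ mul₂ : (ℤ →₀ ℂ) →ₗ[ℂ] (ℤ →₀ ℂ) →ₗ[ℂ] (ℤ →₀ ℂ))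
    (h₁ : ∀ n m : ℤ, mul₁ (W n) (W m) = φ₁ (n, m) • W (m + n))
    (h₂ : ∀ n m : ℤ, mul₂ (W n) (W m) = φ₂ (n, m) • W (m + n)) :
    (∃ T : (ℤ →₀ ℂ) ≃ₗ[ℂ] (ℤ →₀ ℂ),
        ∀ x y : ℤ →₀ ℂ, T (mul₁ x y) = mul₂ (T x) (T y)) ↔
    ((∀ n m : ℤ, φ₁ (n, m) = φ₂ (n, m)) ∨
     (∀ n m : ℤ, φ₁ (n, m) = -φ₂ (-n, -m))) := by
  have cl₁ := classify φ₁ hE1₁ hE2₁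
  have cl₂ := classify φ₂ hE1₂ hE2₂
  constructor
  · rintro ⟨T, hT⟩
    rcases forward_key φ₁ φ₂ mul₁ mul₂ h₁ h₂ cl₁ cl₂ T hT with h | h
    · left; intro n m; rw [cl₁ n m, cl₂ n m, h]
    · right; intro n m
      rw [cl₁ n m, cl₂ (-n) (-m), h]
      push_cast
      ring
  · rintro (h | h)
    · refine ⟨LinearEquiv.refl ℂ _, ?_⟩
      intro x y
      simp only [LinearEquiv.refl_apply]
      induction x using Finsupp.induction_linear with
      | zero => simp
      | add f g hf hg =>
          rw [map_add, map_add, LinearMap.add_apply, LinearMap.add_apply, hf, hg]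
      | single a bb =>
          induction y using Finsupp.induction_linear with
          | zero => simp
          | add f g hf hg => rw [map_add, map_add, hf, hg]
          | single a' b' =>
              simp only [single_eq_smul_W, map_smul, LinearMap.smul_apply]
              rw [h₁, h₂, h a a']
    · refine ⟨(Finsupp.domLCongr (Equiv.neg ℤ)).trans
        (LinearEquiv.neg ℂ : (ℤ →₀ ℂ) ≃ₗ[ℂ] (ℤ →₀ ℂ)), ?_⟩
      set T := (Finsupp.domLCongr (Equiv.neg ℤ)).trans
        (LinearEquiv.neg ℂ : (ℤ →₀ ℂ) ≃ₗ[ℂ] (ℤ →₀ ℂ)) with hT_def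
      have hTW : ∀ k : ℤ, T (W k) = -(W (-k)) := by
        intro k
        rw [hT_def, W, W, LinearEquiv.trans_apply, Finsupp.domLCongr_single,
          LinearEquiv.neg_apply, Equiv.neg_apply]
      intro x y
      induction x using Finsupp.induction_linear with
      | zero => simp
      | add f g hf hg =>
          simp only [map_add, LinearMap.add_apply, hf, hg]
      | single a bb =>
          induction y using Finsupp.induction_linear with
          | zero => simp
          | add f g hf hg => simp only [map_add, hf, hg]
          | single a' b' =>
              simp only [single_eq_smul_W, map_smul, LinearMap.smul_apply]
              congr 1
              congr 1
              rw [h₁, map_smul, hTW, hTW, hTW]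
              simp only [map_neg, LinearMap.neg_apply, neg_neg]
              rw [h₂, h a a', show -a' + -a = -(a' + a) from by ring]
              rw [smul_neg, neg_smul, neg_neg]
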